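/- arXiv:1705.07276 — 2 statements merged into one kernel-verified Lean document; each statement's English description precedes it below -/
import Mathlib

section
/- Let H be a pencilled hfd line set in PG(5,K) and let L[v,κ] be a pencil entirely contained in H (v a point, κ a plane, v ≤ κ). Then L[v,κ] = { X ∈ H : v ≤ X }, i.e. every line of H passing through v lies in the pencil L[v,κ]. -/
/-- The Klein quadratic form on `K^6`. -/
def kleinQ {K : Type*} [Field K] (x : Fin 6 → K) : K :=
  x 0 * x 1 + x 2 * x 3 + x 4 * x 5

/-- The polar bilinear form `B(x,y) = Q(x+y) - Q(x) - Q(y)`. -/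
def kleinB {K : Type*} [Field K] (x y : Fin 6 → K) : K :=
  kleinQ (x + y) - kleinQ x - kleinQ y

/-- The polar subspace `π₅(S)` of a subspace `S`. -/
def kleinPolar {K : Type*} [Field K] (S : Submodule K (Fin 6 → K)) :
    Submodule K (Fin 6 → K) where
  carrier := {y | ∀ s ∈ S, kleinB s y = 0}
  add_mem' := by
    intro a b ha hb s hs
    have h1 := ha s hs
    have h2 := hb s hs
    simp only [kleinB, kleinQ, Pi.add_apply] at *
    linear_combination h1 + h2
  zero_mem' := by
    intro s hs
    simp [kleinB, kleinQ]
  smul_mem' := by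
    intro c a ha s hs
    have h1 := ha s hs
    simp only [kleinB, kleinQ, Pi.add_apply, Pi.smul_apply, smul_eq_mul] at *
    linear_combination c * h1

section Aux
variable {K : Type*} [Field K]


/-- kleinB as a Mathlib bilinear form. -/
def kleinBF : LinearMap.BilinForm K (Fin 6 → K) :=
  LinearMap.mk₂ K kleinB
    (by intro x x' y; simp only [kleinB, kleinQ, Pi.add_apply]; ring)
    (by intro c x y; simp only [kleinB, kleinQ, Pi.add_apply, Pi.smul_apply, smul_eq_mul]; ring)
    (by intro x y y'; simp only [kleinB, kleinQ, Pi.add_apply]; ring)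
    (by intro c x y; simp only [kleinB, kleinQ, Pi.add_apply, Pi.smul_apply, smul_eq_mul]; ring)

lemma kleinBF_apply (x y : Fin 6 → K) : kleinBF x y = kleinB x y := rfl

lemma kleinB_symm (x y : Fin 6 → K) : kleinB x y = kleinB y x := by
  simp only [kleinB, kleinQ, Pi.add_apply]; ring

lemma kleinBF_isRefl : (kleinBF (K := K)).IsRefl := by
  intro x y h
  rw [kleinBF_apply, kleinB_symm] at h
  exact h

lemma kleinPolar_eq (S : Submodule K (Fin 6 → K)) :
    kleinPolar S = kleinBF.orthogonal S := rfl

lemma finrank_kleinPolar_ge (S : Submodule K (Fin 6 → K)) :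
    6 ≤ Module.finrank K S + Module.finrank K (kleinPolar S) := by
  rw [kleinPolar_eq]
  have h := LinearMap.BilinForm.finrank_add_finrank_orthogonal (kleinBF_isRefl (K := K)) S
  rw [h]
  have : Module.finrank K (Fin 6 → K) = 6 := by simp
  omega

/-- The projection onto coordinates 1,3,5. -/
def oddProj : (Fin 6 → K) →ₗ[K] (Fin 3 → K) :=
  LinearMap.pi ![LinearMap.proj 1, LinearMap.proj 3, LinearMap.proj 5]

/-- A totally singular 3-space: the kernel of `oddProj`. -/
lemma finrank_ker_oddProj : 3 ≤ Module.finrank K (LinearMap.ker (oddProj (K := K))) := by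
  have h := LinearMap.finrank_range_add_finrank_ker (oddProj (K := K))
  have h2 : Module.finrank K (LinearMap.range (oddProj (K := K))) ≤ 3 := by
    have := Submodule.finrank_le (LinearMap.range (oddProj (K := K)))
    simpa using this
  have : Module.finrank K (Fin 6 → K) = 6 := by simp
  omega

lemma kleinQ_ker_oddProj {x : Fin 6 → K} (hx : x ∈ LinearMap.ker (oddProj (K := K))) :
    kleinQ x = 0 := by
  rw [LinearMap.mem_ker] at hx
  have h1 : x 1 = 0 := congrFun hx 0
  have h3 : x 3 = 0 := congrFun hx 1
  have h5 : x 5 = 0 := congrFun hx 2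
  simp [kleinQ, h1, h3, h5]

end Aux

/-- `τ` is a tangent hyperplane of the Klein quadric. -/
def IsTangentHyperplane {K : Type*} [Field K] (τ : Submodule K (Fin 6 → K)) : Prop :=
  ∃ x : Fin 6 → K, x ≠ 0 ∧ kleinQ x = 0 ∧ τ = kleinPolar (Submodule.span K {x})

/-- A subspace is external to the Klein quadric. -/
def IsExternal {K : Type*} [Field K] (S : Submodule K (Fin 6 → K)) : Prop :=
  ∀ s ∈ S, s ≠ 0 → kleinQ s ≠ 0

/-- A `0`-secant of the Klein quadric: an external line. -/
def IsSecant {K : Type*} [Field K] (G : Submodule K (Fin 6 → K)) : Prop :=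
  Module.finrank K G = 2 ∧ IsExternal G

/-- The pencil of lines with vertex `v` and carrier plane `κ`. -/
def pencil {K : Type*} [Field K] (v κ : Submodule K (Fin 6 → K)) :
    Set (Submodule K (Fin 6 → K)) :=
  {X | Module.finrank K X = 2 ∧ v ≤ X ∧ X ≤ κ}

/-- An hfd line set: a set of `0`-secants such that every tangent hyperplane
contains exactly one member. -/
def IsHfd {K : Type*} [Field K] (H : Set (Submodule K (Fin 6 → K))) : Prop :=
  (∀ G ∈ H, IsSecant G) ∧
    ∀ τ : Submodule K (Fin 6 → K), IsTangentHyperplane τ → ∃! G, G ∈ H ∧ G ≤ τ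

/-- A pencilled hfd line set: every member lies in a pencil entirely contained in `H`. -/
def IsPencilledHfd {K : Type*} [Field K] (H : Set (Submodule K (Fin 6 → K))) : Prop :=
  IsHfd H ∧
    ∀ G ∈ H, ∃ v κ : Submodule K (Fin 6 → K), Module.finrank K v = 1 ∧
      Module.finrank K κ = 3 ∧ v ≤ κ ∧ pencil v κ ⊆ H ∧ G ∈ pencil v κ

/-- `v` is a vertex of the pencilled hfd line set `H`. -/
def IsVertex {K : Type*} [Field K] (H : Set (Submodule K (Fin 6 → K)))
    (v : Submodule K (Fin 6 → K)) : Prop :=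
  Module.finrank K v = 1 ∧ ∃ κ : Submodule K (Fin 6 → K),
    Module.finrank K κ = 3 ∧ v ≤ κ ∧ pencil v κ ⊆ H

/-- `κ` is a carrier plane of the pencilled hfd line set `H`. -/
def IsCarrier {K : Type*} [Field K] (H : Set (Submodule K (Fin 6 → K)))
    (κ : Submodule K (Fin 6 → K)) : Prop :=
  Module.finrank K κ = 3 ∧ ∃ v : Submodule K (Fin 6 → K),
    Module.finrank K v = 1 ∧ v ≤ κ ∧ pencil v κ ⊆ H

/-- Lemma 4.7.
If a pencil `L[v,κ]` is entirely contained in a pencilled hfd line set `H`, then it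
consists exactly of the lines of `H` through `v`. -/
theorem pencil_eq_lines_through_vertex {K : Type*} [Field K]
    (H : Set (Submodule K (Fin 6 → K))) (hH : IsPencilledHfd H)
    (v κ : Submodule K (Fin 6 → K))
    (hv : Module.finrank K v = 1) (hκ : Module.finrank K κ = 3)
    (hvκ : v ≤ κ) (hpen : pencil v κ ⊆ H) :
    pencil v κ = {X | X ∈ H ∧ v ≤ X} := by
  ext X
  constructor
  · intro hX
    exact ⟨hpen hX, hX.2.1⟩
  · rintro ⟨hX, hvX⟩
    have hsec : IsSecant X := hH.1.1 X hX
    have hX2 : Module.finrank K X = 2 := hsec.1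
    have hfr6 : Module.finrank K (Fin 6 → K) = 6 := by simp
    -- find a nonzero singular vector p orthogonal to X
    have hA : 4 ≤ Module.finrank K (kleinPolar X) := by
      have := finrank_kleinPolar_ge X
      omega
    have hinf : 1 ≤ Module.finrank K
        (kleinPolar X ⊓ LinearMap.ker (oddProj (K := K)) : Submodule K (Fin 6 → K)) := by
      have h1 := Submodule.finrank_sup_add_finrank_inf_eq (kleinPolar X)
        (LinearMap.ker (oddProj (K := K)))
      have h2 := Submodule.finrank_le
        (kleinPolar X ⊔ LinearMap.ker (oddProj (K := K)) : Submodule K (Fin 6 → K))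
      have h3 := finrank_ker_oddProj (K := K)
      omega
    have hne : (kleinPolar X ⊓ LinearMap.ker (oddProj (K := K)) : Submodule K (Fin 6 → K)) ≠ ⊥ := by
      intro h
      rw [h] at hinf
      simp at hinf
    obtain ⟨p, hp, hp0⟩ := Submodule.exists_mem_ne_zero_of_ne_bot hne
    obtain ⟨hpA, hpW⟩ := hp
    have hQp : kleinQ p = 0 := kleinQ_ker_oddProj hpW
    -- the tangent hyperplane τ
    set τ := kleinPolar (Submodule.span K {p}) with hτ
    have htan : IsTangentHyperplane τ := ⟨p, hp0, hQp, rfl⟩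
    have hXτ : X ≤ τ := by
      intro y hy s hs
      obtain ⟨c, rfl⟩ := Submodule.mem_span_singleton.mp hs
      have hpy : kleinB p y = 0 := by
        rw [kleinB_symm]
        exact hpA y hy
      simp only [kleinB, kleinQ, Pi.add_apply, Pi.smul_apply, smul_eq_mul] at hpy ⊢
      linear_combination c * hpy
    have hτ5 : 5 ≤ Module.finrank K τ := by
      rw [hτ]
      have h1 := finrank_kleinPolar_ge (Submodule.span K {p})
      rw [finrank_span_singleton hp0] at h1
      omega
    -- κ ⊓ τ has dimension at least 2
    have hκτ : 2 ≤ Module.finrank K (κ ⊓ τ : Submodule K (Fin 6 → K)) := by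
      have h1 := Submodule.finrank_sup_add_finrank_inf_eq κ τ
      have h2 := Submodule.finrank_le (κ ⊔ τ : Submodule K (Fin 6 → K))
      omega
    have hvκτ : v ≤ κ ⊓ τ := le_inf hvκ (hvX.trans hXτ)
    -- pick w ∈ κ ⊓ τ outside v
    have hnle : ¬ (κ ⊓ τ : Submodule K (Fin 6 → K)) ≤ v := by
      intro h
      have := Submodule.finrank_mono h
      omega
    obtain ⟨w, hw, hwv⟩ := SetLike.not_le_iff_exists.mp hnle
    have hw0 : w ≠ 0 := fun h => hwv (h ▸ v.zero_mem)
    -- the pencil line Y through v and w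
    set Y := v ⊔ Submodule.span K {w} with hY
    have hvY : v ≤ Y := le_sup_left
    have hYκτ : Y ≤ κ ⊓ τ := sup_le hvκτ ((Submodule.span_le).mpr (Set.singleton_subset_iff.mpr hw))
    have hdisj : v ⊓ Submodule.span K {w} = ⊥ := by
      rw [eq_bot_iff]
      rintro x ⟨hxv, hxw⟩
      obtain ⟨c, rfl⟩ := Submodule.mem_span_singleton.mp hxw
      rcases eq_or_ne c 0 with rfl | hc
      · simp
      · exact absurd ((Submodule.smul_mem_iff v hc).mp hxv) hwv
    have hfrY : Module.finrank K Y = 2 := by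
      rw [hY]
      have h1 := Submodule.finrank_sup_add_finrank_inf_eq v (Submodule.span K {w})
      rw [hdisj, hv, finrank_span_singleton hw0] at h1
      simp only [finrank_bot] at h1
      omega
    have hYpen : Y ∈ pencil v κ := ⟨hfrY, hvY, hYκτ.trans inf_le_left⟩
    have hYH : Y ∈ H := hpen hYpen
    -- uniqueness in τ forces X = Y
    obtain ⟨G, _, hGuniq⟩ := hH.1.2 τ htan
    have hXG : X = G := hGuniq X ⟨hX, hXτ⟩
    have hYG : Y = G := hGuniq Y ⟨hYH, hYκτ.trans inf_le_right⟩
    have hXY : X = Y := hXG.trans hYG.symm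
    exact ⟨hsec.1, hvX, hXY ▸ (hYκτ.trans inf_le_left)⟩
end

section
/- Let ε₁ be a plane of PG(5,K) (3-dimensional subspace of V) that is external to the Klein quadric H₅. Then there exists a plane ε₂, also external to H₅, such that ε₁ ∩ ε₂ is a line, i.e. dim(ε₁ ∩ ε₂) = 2 and ε₁ ≠ ε₂. -/
section AuxLemmas

variable {K : Type*} [Field K]

lemma mem_kleinPolar' {S : Submodule K (Fin 6 → K)} {y : Fin 6 → K} :
    y ∈ kleinPolar S ↔ ∀ s ∈ S, kleinB s y = 0 := Iff.rfl

lemma kleinQ_seven (a b c : Fin 6 → K) :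
    kleinQ (a + b + c) = kleinQ (a + b) + kleinQ (a + c) + kleinQ (b + c)
      - kleinQ a - kleinQ b - kleinQ c := by
  simp only [kleinQ, Pi.add_apply]; ring

/-- The linear functional `x ↦ B(x, u)`. -/
def kleinBu (u : Fin 6 → K) : (Fin 6 → K) →ₗ[K] K where
  toFun x := kleinB x u
  map_add' x y := by simp only [kleinB, kleinQ, Pi.add_apply]; ring
  map_smul' c x := by
    simp only [kleinB, kleinQ, Pi.add_apply, Pi.smul_apply, smul_eq_mul, RingHom.id_apply]
    ring

/-- The orthogonal reflection in an anisotropic vector `u`. -/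
def kleinRefl (u : Fin 6 → K) : (Fin 6 → K) →ₗ[K] (Fin 6 → K) :=
  LinearMap.id - LinearMap.smulRight ((kleinQ u)⁻¹ • kleinBu u) u

lemma kleinRefl_apply (u x : Fin 6 → K) :
    kleinRefl u x = x - ((kleinQ u)⁻¹ * kleinB x u) • u := by
  simp [kleinRefl, kleinBu, mul_smul]

lemma kleinQ_sub_smul (x u : Fin 6 → K) (l : K) :
    kleinQ (x - l • u) = kleinQ x + l ^ 2 * kleinQ u - l * kleinB x u := by
  simp only [kleinQ, kleinB, Pi.sub_apply, Pi.add_apply, Pi.smul_apply, smul_eq_mul]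
  ring

lemma kleinB_sub_smul (x u : Fin 6 → K) (l : K) :
    kleinB (x - l • u) u = kleinB x u - l * kleinB u u := by
  simp only [kleinQ, kleinB, Pi.sub_apply, Pi.add_apply, Pi.smul_apply, smul_eq_mul]
  ring

lemma kleinB_self (u : Fin 6 → K) : kleinB u u = 2 * kleinQ u := by
  simp only [kleinQ, kleinB, Pi.add_apply]; ring

lemma kleinQ_refl (u x : Fin 6 → K) (hu : kleinQ u ≠ 0) :
    kleinQ (kleinRefl u x) = kleinQ x := by
  rw [kleinRefl_apply, kleinQ_sub_smul]
  field_simp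
  ring

lemma kleinRefl_involutive (u : Fin 6 → K) (hu : kleinQ u ≠ 0) :
    Function.Involutive (kleinRefl u) := by
  intro x
  rw [kleinRefl_apply, kleinRefl_apply, kleinB_sub_smul, kleinB_self]
  have h : (kleinQ u)⁻¹ * (kleinB x u - (kleinQ u)⁻¹ * kleinB x u * (2 * kleinQ u))
      = -((kleinQ u)⁻¹ * kleinB x u) := by
    field_simp
    ring
  rw [h, neg_smul]
  abel

lemma line_cover {S T : Submodule K (Fin 6 → K)} {v d : Fin 6 → K} {c : K}
    (hc0 : c ≠ 0) (hc1 : c ≠ 1)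
    (h : ∀ t : K, v + t • d ∈ S ∨ v + t • d ∈ T) :
    (v ∈ S ∧ d ∈ S) ∨ (v ∈ T ∧ d ∈ T) := by
  have h0 := h 0
  have h1 := h 1
  have hc := h c
  rw [zero_smul, add_zero] at h0
  rw [one_smul] at h1
  have e1 : v + d - v = d := by abel
  have ec : v + c • d - v = c • d := by abel
  have ec1 : v + c • d - (v + d) = (c - 1) • d := by rw [sub_smul, one_smul]; abel
  have ev : v + d - d = v := by abel
  have hc1' : c - 1 ≠ 0 := sub_ne_zero.mpr hc1
  rcases h0 with h0 | h0 <;> rcases h1 with h1 | h1 <;> rcases hc with hcc | hcc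
  · exact Or.inl ⟨h0, e1 ▸ S.sub_mem h1 h0⟩
  · exact Or.inl ⟨h0, e1 ▸ S.sub_mem h1 h0⟩
  · exact Or.inl ⟨h0, (S.smul_mem_iff hc0).mp (ec ▸ S.sub_mem hcc h0)⟩
  · have hd : d ∈ T := (T.smul_mem_iff hc1').mp (ec1 ▸ T.sub_mem hcc h1)
    exact Or.inr ⟨ev ▸ T.sub_mem h1 hd, hd⟩
  · have hd : d ∈ S := (S.smul_mem_iff hc1').mp (ec1 ▸ S.sub_mem hcc h1)
    exact Or.inl ⟨ev ▸ S.sub_mem h1 hd, hd⟩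
  · exact Or.inr ⟨h0, (T.smul_mem_iff hc0).mp (ec ▸ T.sub_mem hcc h0)⟩
  · exact Or.inr ⟨h0, e1 ▸ T.sub_mem h1 h0⟩
  · exact Or.inr ⟨h0, e1 ▸ T.sub_mem h1 h0⟩

end AuxLemmas

section Main

variable {K : Type*} [Field K]

/-- Over a field with at least 3 elements, there is an anisotropic vector outside
`ε₁ ∪ ε₁^⊥`. -/
lemma exists_good (ε₁ : Submodule K (Fin 6 → K)) (hdim : Module.finrank K ε₁ = 3)
    (hext : IsExternal ε₁) {c : K} (hc0 : c ≠ 0) (hc1 : c ≠ 1) :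
    ∃ u : Fin 6 → K, kleinQ u ≠ 0 ∧ u ∉ ε₁ ∧ u ∉ kleinPolar ε₁ := by
  by_contra hcon
  push_neg at hcon
  have cover : ∀ u : Fin 6 → K, kleinQ u ≠ 0 → u ∈ ε₁ ∨ u ∈ kleinPolar ε₁ := by
    intro u hu
    by_cases h : u ∈ ε₁
    · exact Or.inl h
    · exact Or.inr (hcon u hu h)
  set T := kleinPolar ε₁ with hT
  set v0 : Fin 6 → K := ![1, 1, 0, 0, 0, 0] with hv0
  have hno : ∀ d : Fin 6 → K, kleinQ d = 0 → d ≠ 0 → d ∉ ε₁ := by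
    intro d hQ hne hmem
    exact hext d hmem hne hQ
  -- the four isotropic coordinate directions
  set d2 : Fin 6 → K := ![0, 0, 1, 0, 0, 0] with hd2
  set d3 : Fin 6 → K := ![0, 0, 0, 1, 0, 0] with hd3
  set d4 : Fin 6 → K := ![0, 0, 0, 0, 1, 0] with hd4
  set d5 : Fin 6 → K := ![0, 0, 0, 0, 0, 1] with hd5
  have hQ2 : ∀ t : K, kleinQ (v0 + t • d2) = 1 := by
    intro t
    show (1 + t * 0) * (1 + t * 0) + (0 + t * 1) * (0 + t * 0) + (0 + t * 0) * (0 + t * 0) = 1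
    ring
  have hQ3 : ∀ t : K, kleinQ (v0 + t • d3) = 1 := by
    intro t
    show (1 + t * 0) * (1 + t * 0) + (0 + t * 0) * (0 + t * 1) + (0 + t * 0) * (0 + t * 0) = 1
    ring
  have hQ4 : ∀ t : K, kleinQ (v0 + t • d4) = 1 := by
    intro t
    show (1 + t * 0) * (1 + t * 0) + (0 + t * 0) * (0 + t * 0) + (0 + t * 1) * (0 + t * 0) = 1
    ring
  have hQ5 : ∀ t : K, kleinQ (v0 + t • d5) = 1 := by
    intro t
    show (1 + t * 0) * (1 + t * 0) + (0 + t * 0) * (0 + t * 0) + (0 + t * 0) * (0 + t * 1) = 1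
    ring
  have one0 : (1 : K) ≠ 0 := one_ne_zero
  have hT2 : d2 ∈ T := by
    rcases line_cover hc0 hc1 (fun t => cover _ (by rw [hQ2 t]; exact one0)) with h | h
    · exact absurd h.2 (hno d2 (by show (0:K)*0 + 1*0 + 0*0 = 0; ring)
        (fun h0 => one0 (congrFun h0 2)))
    · exact h.2
  have hT3 : d3 ∈ T := by
    rcases line_cover hc0 hc1 (fun t => cover _ (by rw [hQ3 t]; exact one0)) with h | h
    · exact absurd h.2 (hno d3 (by show (0:K)*0 + 0*1 + 0*0 = 0; ring)
        (fun h0 => one0 (congrFun h0 3)))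
    · exact h.2
  have hT4 : d4 ∈ T := by
    rcases line_cover hc0 hc1 (fun t => cover _ (by rw [hQ4 t]; exact one0)) with h | h
    · exact absurd h.2 (hno d4 (by show (0:K)*0 + 0*0 + 1*0 = 0; ring)
        (fun h0 => one0 (congrFun h0 4)))
    · exact h.2
  have hT5 : d5 ∈ T := by
    rcases line_cover hc0 hc1 (fun t => cover _ (by rw [hQ5 t]; exact one0)) with h | h
    · exact absurd h.2 (hno d5 (by show (0:K)*0 + 0*0 + 0*1 = 0; ring)
        (fun h0 => one0 (congrFun h0 5)))
    · exact h.2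
  have hTv0 : v0 ∈ T := by
    rcases line_cover hc0 hc1 (fun t => cover _ (by rw [hQ2 t]; exact one0)) with h | h
    · exact absurd h.2 (hno d2 (by show (0:K)*0 + 1*0 + 0*0 = 0; ring)
        (fun h0 => one0 (congrFun h0 2)))
    · exact h.1
  -- every x ∈ ε₁ is a multiple of g
  set g : Fin 6 → K := ![1, -1, 0, 0, 0, 0] with hg
  have hle : ε₁ ≤ Submodule.span K {g} := by
    intro x hx
    have hB2 : kleinB x d2 = 0 := hT2 x hx
    have hB3 : kleinB x d3 = 0 := hT3 x hx
    have hB4 : kleinB x d4 = 0 := hT4 x hx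
    have hB5 : kleinB x d5 = 0 := hT5 x hx
    have hBv : kleinB x v0 = 0 := hTv0 x hx
    have e2 : x 3 = 0 := by
      have : kleinB x d2 = x 3 := by
        show kleinQ (x + d2) - kleinQ x - kleinQ d2 = x 3
        show (x 0 + 0) * (x 1 + 0) + (x 2 + 1) * (x 3 + 0) + (x 4 + 0) * (x 5 + 0)
          - (x 0 * x 1 + x 2 * x 3 + x 4 * x 5) - ((0:K)*0 + 1*0 + 0*0) = x 3
        ring
      rw [this] at hB2; exact hB2
    have e3 : x 2 = 0 := by
      have : kleinB x d3 = x 2 := by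
        show kleinQ (x + d3) - kleinQ x - kleinQ d3 = x 2
        show (x 0 + 0) * (x 1 + 0) + (x 2 + 0) * (x 3 + 1) + (x 4 + 0) * (x 5 + 0)
          - (x 0 * x 1 + x 2 * x 3 + x 4 * x 5) - ((0:K)*0 + 0*1 + 0*0) = x 2
        ring
      rw [this] at hB3; exact hB3
    have e4 : x 5 = 0 := by
      have : kleinB x d4 = x 5 := by
        show kleinQ (x + d4) - kleinQ x - kleinQ d4 = x 5
        show (x 0 + 0) * (x 1 + 0) + (x 2 + 0) * (x 3 + 0) + (x 4 + 1) * (x 5 + 0)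
          - (x 0 * x 1 + x 2 * x 3 + x 4 * x 5) - ((0:K)*0 + 0*0 + 1*0) = x 5
        ring
      rw [this] at hB4; exact hB4
    have e5 : x 4 = 0 := by
      have : kleinB x d5 = x 4 := by
        show kleinQ (x + d5) - kleinQ x - kleinQ d5 = x 4
        show (x 0 + 0) * (x 1 + 0) + (x 2 + 0) * (x 3 + 0) + (x 4 + 0) * (x 5 + 1)
          - (x 0 * x 1 + x 2 * x 3 + x 4 * x 5) - ((0:K)*0 + 0*0 + 0*1) = x 4
        ring
      rw [this] at hB5; exact hB5
    have ev : x 0 + x 1 = 0 := by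
      have : kleinB x v0 = x 0 + x 1 := by
        show kleinQ (x + v0) - kleinQ x - kleinQ v0 = x 0 + x 1
        show (x 0 + 1) * (x 1 + 1) + (x 2 + 0) * (x 3 + 0) + (x 4 + 0) * (x 5 + 0)
          - (x 0 * x 1 + x 2 * x 3 + x 4 * x 5) - ((1:K)*1 + 0*0 + 0*0) = x 0 + x 1
        ring
      rw [this] at hBv; exact hBv
    refine Submodule.mem_span_singleton.mpr ⟨x 0, ?_⟩
    funext i
    fin_cases i
    · show x 0 * 1 = x 0; ring
    · show x 0 * (-1) = x 1; linear_combination -ev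
    · show x 0 * 0 = x 2; rw [e3]; ring
    · show x 0 * 0 = x 3; rw [e2]; ring
    · show x 0 * 0 = x 4; rw [e5]; ring
    · show x 0 * 0 = x 5; rw [e4]; ring
  have hgne : g ≠ 0 := fun h0 => one0 (congrFun h0 0)
  have hsp : Module.finrank K (Submodule.span K ({g} : Set (Fin 6 → K))) = 1 :=
    finrank_span_singleton hgne
  have h31 : (3 : ℕ) ≤ 1 := by
    rw [← hdim, ← hsp]
    exact Submodule.finrank_mono hle
  omega

end Main

section Main2

variable {K : Type*} [Field K]

/-- Over the field with two elements there is no external plane. -/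
lemma small_field_no_external (ε₁ : Submodule K (Fin 6 → K))
    (hdim : Module.finrank K ε₁ = 3) (hext : IsExternal ε₁)
    (hK : ∀ t : K, t ≠ 0 → t = 1) : False := by
  have : FiniteDimensional K ↥ε₁ := Module.finite_of_finrank_eq_succ hdim
  let bb := Module.finBasisOfFinrankEq K ↥ε₁ hdim
  set a : Fin 6 → K := (bb 0 : Fin 6 → K) with ha
  set b : Fin 6 → K := (bb 1 : Fin 6 → K) with hb
  set c : Fin 6 → K := (bb 2 : Fin 6 → K) with hc
  have li : LinearIndependent K (fun i => ((bb i : Fin 6 → K))) :=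
    bb.linearIndependent.map' ε₁.subtype ε₁.ker_subtype
  have hne : ∀ x y z : K, ¬(x = 0 ∧ y = 0 ∧ z = 0) → x • a + y • b + z • c ≠ 0 := by
    intro x y z hxyz h0
    apply hxyz
    have hsum : ∑ i, ![x, y, z] i • ((bb i : Fin 6 → K)) = 0 := by
      rw [Fin.sum_univ_three]
      show x • (bb 0 : Fin 6 → K) + y • (bb 1 : Fin 6 → K) + z • (bb 2 : Fin 6 → K) = 0
      rw [← ha, ← hb, ← hc]
      exact h0
    have hz := Fintype.linearIndependent_iff.mp li ![x, y, z] hsum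
    exact ⟨hz 0, hz 1, hz 2⟩
  have hmem : ∀ x y z : K, x • a + y • b + z • c ∈ ε₁ := by
    intro x y z
    exact ε₁.add_mem (ε₁.add_mem (ε₁.smul_mem _ (bb 0).2) (ε₁.smul_mem _ (bb 1).2))
      (ε₁.smul_mem _ (bb 2).2)
  have hval : ∀ x y z : K, ¬(x = 0 ∧ y = 0 ∧ z = 0) → kleinQ (x • a + y • b + z • c) = 1 := by
    intro x y z hxyz
    exact hK _ (hext _ (hmem x y z) (hne x y z hxyz))
  have h100 := hval 1 0 0 (by norm_num)
  have h010 := hval 0 1 0 (by norm_num)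
  have h001 := hval 0 0 1 (by norm_num)
  have h110 := hval 1 1 0 (by norm_num)
  have h101 := hval 1 0 1 (by norm_num)
  have h011 := hval 0 1 1 (by norm_num)
  have h111 := hval 1 1 1 (by norm_num)
  simp only [one_smul, zero_smul, add_zero, zero_add] at h100 h010 h001 h110 h101 h011 h111
  have hsev := kleinQ_seven a b c
  rw [h111, h110, h101, h011, h100, h010, h001] at hsev
  have : (1 : K) = 0 := by linear_combination hsev
  exact one_ne_zero this

theorem exists_second_external_plane' (ε₁ : Submodule K (Fin 6 → K))
    (hdim : Module.finrank K ε₁ = 3) (hext : IsExternal ε₁) :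
    ∃ ε₂ : Submodule K (Fin 6 → K), Module.finrank K ε₂ = 3 ∧ IsExternal ε₂ ∧
      Module.finrank K (ε₁ ⊓ ε₂ : Submodule K (Fin 6 → K)) = 2 ∧ ε₁ ≠ ε₂ := by
  by_cases hK : ∃ t : K, t ≠ 0 ∧ t ≠ 1
  swap
  · push_neg at hK
    exact absurd (small_field_no_external ε₁ hdim hext hK) (fun h => h)
  obtain ⟨c, hc0, hc1⟩ := hK
  obtain ⟨u, hQu, hu1, hu2⟩ := exists_good ε₁ hdim hext hc0 hc1
  obtain ⟨s₀, hs₀mem, hs₀⟩ : ∃ s ∈ ε₁, kleinB s u ≠ 0 := by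
    by_contra h
    push_neg at h
    exact hu2 (fun s hs => h s hs)
  have hinv := kleinRefl_involutive u hQu
  let e : (Fin 6 → K) ≃ₗ[K] (Fin 6 → K) := LinearEquiv.ofInvolutive (kleinRefl u) hinv
  set ε₂ := Submodule.map (kleinRefl u) ε₁ with hε₂
  have hd2 : Module.finrank K ε₂ = 3 := by
    have hmapeq : Submodule.map ((e : (Fin 6 → K) →ₗ[K] (Fin 6 → K))) ε₁ = ε₂ := by
      congr 1
    rw [← hmapeq, LinearEquiv.finrank_map_eq]
    exact hdim
  have hext2 : IsExternal ε₂ := by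
    rintro s ⟨x, hx, rfl⟩ hsne
    have hxne : x ≠ 0 := by
      rintro rfl
      simp only [map_zero, ne_eq, not_true_eq_false] at hsne
    rw [kleinQ_refl u x hQu]
    exact hext x hx hxne
  have hker : ε₁ ⊓ ε₂ = ε₁ ⊓ LinearMap.ker (kleinBu u) := by
    ext x
    constructor
    · rintro ⟨hx1, y, hy, hxx⟩
      have hcu : ((kleinQ u)⁻¹ * kleinB y u) • u = y - x := by
        rw [← hxx, kleinRefl_apply]; abel
      by_cases hc' : (kleinQ u)⁻¹ * kleinB y u = 0
      · have hby : kleinB y u = 0 := by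
          rcases mul_eq_zero.mp hc' with h | h
          · exact absurd h (inv_ne_zero hQu)
          · exact h
        have hxy : x = y := by rw [← hxx, kleinRefl_apply, hby]; simp
        refine ⟨hx1, ?_⟩
        show kleinB x u = 0
        rw [hxy]; exact hby
      · exfalso
        apply hu1
        have hmem : ((kleinQ u)⁻¹ * kleinB y u) • u ∈ ε₁ := by
          rw [hcu]; exact ε₁.sub_mem hy hx1
        exact (ε₁.smul_mem_iff hc').mp hmem
    · rintro ⟨hx1, hx2⟩
      refine ⟨hx1, x, hx1, ?_⟩
      have hbx : kleinB x u = 0 := hx2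
      rw [kleinRefl_apply, hbx]
      simp
  have hint : Module.finrank K (ε₁ ⊓ ε₂ : Submodule K (Fin 6 → K)) = 2 := by
    rw [hker]
    set φ := (kleinBu u).comp ε₁.subtype with hφdef
    have hrange : LinearMap.range φ = ⊤ := by
      rw [LinearMap.range_eq_top]
      intro t
      refine ⟨⟨(t / kleinB s₀ u) • s₀, ε₁.smul_mem _ hs₀mem⟩, ?_⟩
      show kleinBu u ((t / kleinB s₀ u) • s₀) = t
      rw [map_smul]
      show (t / kleinB s₀ u) • kleinB s₀ u = t
      rw [smul_eq_mul]
      field_simp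
    have : FiniteDimensional K ↥ε₁ := Module.finite_of_finrank_eq_succ hdim
    have hrn := LinearMap.finrank_range_add_finrank_ker φ
    rw [hrange, finrank_top, Module.finrank_self, hdim] at hrn
    have hkerφ : Module.finrank K ↥(LinearMap.ker φ) = 2 := by omega
    have hmapker : (LinearMap.ker φ).map ε₁.subtype = ε₁ ⊓ LinearMap.ker (kleinBu u) := by
      rw [hφdef, LinearMap.ker_comp, Submodule.map_comap_subtype]
    rw [← hmapker, Submodule.finrank_map_subtype_eq]
    exact hkerφ
  refine ⟨ε₂, hd2, hext2, hint, ?_⟩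
  intro heq
  rw [← heq, inf_idem, hdim] at hint
  omega

end Main2


/-- Lemma 4.9.
For every plane `ε₁` external to the Klein quadric there exists another external
plane `ε₂` meeting `ε₁` in a line. -/
theorem exists_second_external_plane {K : Type*} [Field K]
    (ε₁ : Submodule K (Fin 6 → K)) (hdim : Module.finrank K ε₁ = 3)
    (hext : IsExternal ε₁) :
    ∃ ε₂ : Submodule K (Fin 6 → K), Module.finrank K ε₂ = 3 ∧ IsExternal ε₂ ∧
      Module.finrank K (ε₁ ⊓ ε₂ : Submodule K (Fin 6 → K)) = 2 ∧ ε₁ ≠ ε₂ :=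
  exists_second_external_plane' ε₁ hdim hext
end
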